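/- Let I and O be finite nonempty sets, with each agent i ∈ I having a total preorder ≿_i on O. Let p, p' ∈ ℝ_{≥0}^{I×O} satisfy Σ_{o∈O} p'_{i,o} = Σ_{o∈O} p_{i,o} for every i ∈ I and Σ_{i∈I} p'_{i,o} = Σ_{i∈I} p_{i,o} for every o ∈ O. Suppose p'_i ≿^sd_i p_i for every i and there exists j with p'_j ≻^sd_j p_j. Then there exist k ≥ 2, agents i_1,…,i_k ∈ I (not necessarily distinct) and objects o_1,…,o_k ∈ O such that, with indices taken modulo k: p_{i_t,o_t} > 0 and o_{t+1} ≿_{i_t} o_t for every t ∈ {1,…,k}, and o_{t+1} ≻_{i_t} o_t for at least one t. That is, any strict stochastic-dominance improvement that preserves each agent's total and each object's total usage gives rise to an improving trading cycle among positive consumptions. -/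

import Mathlib

open Finset

/-- Lottery `l` weakly stochastically dominates `l'` with respect to the
preference (total preorder) `R`. -/
def SDom {O : Type*} [Fintype O] (R : O → O → Prop) [DecidableRel R]
    (l l' : O → ℝ) : Prop :=
  ∀ o : O,
    ∑ o' ∈ univ.filter (fun o' => R o' o), l' o' ≤
      ∑ o' ∈ univ.filter (fun o' => R o' o), l o'

/-- Lottery `l` strictly stochastically dominates `l'` with respect to `R`. -/
def SSDom {O : Type*} [Fintype O] (R : O → O → Prop) [DecidableRel R]
    (l l' : O → ℝ) : Prop :=
  SDom R l l' ∧
    ∃ o : O,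
      ∑ o' ∈ univ.filter (fun o' => R o' o), l' o' <
        ∑ o' ∈ univ.filter (fun o' => R o' o), l o'

/-- Any strict stochastic-dominance improvement `p'` over `p` that preserves
each agent's total and each object's total usage gives rise to an improving
trading cycle among positive consumptions of `p`: there are agents
`i_1, …, i_k` and objects `o_1, …, o_k` (`k ≥ 2`, indices mod `k`) such that
each `i_t` consumes a positive amount of `o_t` in `p`, weakly prefers
`o_{t+1}` to `o_t`, and some `i_t` strictly prefers `o_{t+1}` to `o_t`. -/
theorem FTTC_key {I O : Type*} [Fintype I] [Fintype O]
    (R : I → O → O → Prop) [∀ i, DecidableRel (R i)]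
    (htotal : ∀ i, Total (R i)) (htrans : ∀ i, Transitive (R i))
    (p : I → O → ℝ) :
    ∀ (n : ℕ) (δ : I → O → ℝ),
      (univ.filter (fun x : I × O => δ x.1 x.2 ≠ 0)).card ≤ n →
      (∀ i, ∑ o, δ i o = 0) →
      (∀ o, ∑ i, δ i o = 0) →
      (∀ i o, 0 ≤ ∑ o' ∈ univ.filter (fun o' => R i o' o), δ i o') →
      (∀ i o, δ i o < 0 → 0 < p i o) →
      (0 < ∑ i, ∑ o, ∑ o' ∈ univ.filter (fun o' => R i o' o), δ i o') →
      ∃ k, 2 ≤ k ∧ ∃ (ag : ℕ → I) (ob : ℕ → O),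
        (∀ t < k, 0 < p (ag t) (ob t) ∧ R (ag t) (ob ((t + 1) % k)) (ob t)) ∧
        (∃ t < k, R (ag t) (ob ((t + 1) % k)) (ob t) ∧
          ¬ R (ag t) (ob t) (ob ((t + 1) % k))) := by
  intro n
  induction n with
  | zero =>
      intro δ hcard hrow hcol hsd hneg hW
      exfalso
      have h0 : ∀ i o, δ i o = 0 := by
        intro i o
        by_contra h
        have hm : (i, o) ∈ univ.filter (fun x : I × O => δ x.1 x.2 ≠ 0) := by
          simp [h]
        have := Finset.card_pos.mpr ⟨_, hm⟩
        omega
      simp [h0] at hW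
  | succ n ih =>
      intro δ hcard hrow hcol hsd hneg hW
      classical
      -- reflexivity
      have hrefl : ∀ i o, R i o o := by
        intro i o; rcases htotal i o o with h | h <;> exact h
      -- find j, ostar with strict SD
      have hjo : ∃ j ostar, 0 < ∑ o' ∈ univ.filter (fun o' => R j o' ostar), δ j o' := by
        by_contra h
        push_neg at h
        have : ∑ i, ∑ o, ∑ o' ∈ univ.filter (fun o' => R i o' o), δ i o' ≤ 0 := by
          apply Finset.sum_nonpos
          intro i _
          apply Finset.sum_nonpos
          intro o _
          exact h i o
        linarith
      obtain ⟨j, ostar, hjstar⟩ := hjo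
      -- o₀ : not in upper set, δ j o₀ < 0
      have hsplit := Finset.sum_filter_add_sum_filter_not univ (fun o' => R j o' ostar) (δ j)
      rw [hrow j] at hsplit
      have hlow : ∑ o' ∈ univ.filter (fun o' => ¬ R j o' ostar), δ j o' < 0 := by linarith
      have ho0 : ∃ o₀, ¬ R j o₀ ostar ∧ δ j o₀ < 0 := by
        by_contra h
        push_neg at h
        have : 0 ≤ ∑ o' ∈ univ.filter (fun o' => ¬ R j o' ostar), δ j o' :=
          Finset.sum_nonneg (by intro o ho; simp at ho; exact h o ho)
        linarith
      obtain ⟨o₀, ho₀star, ho₀neg⟩ := ho0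
      have ho1 : ∃ o₁, R j o₁ ostar ∧ 0 < δ j o₁ := by
        by_contra h
        push_neg at h
        have : ∑ o' ∈ univ.filter (fun o' => R j o' ostar), δ j o' ≤ 0 :=
          Finset.sum_nonpos (by intro o ho; simp at ho; exact h o ho)
        linarith
      obtain ⟨o₁, ho₁star, ho₁pos⟩ := ho1
      have hstrict01 : ¬ R j o₀ o₁ := fun h => ho₀star (htrans j h ho₁star)
      have hweak01 : R j o₁ o₀ := (htotal j o₁ o₀).resolve_right hstrict01
      -- step lemma
      have stepL : ∀ x : I × O, 0 < δ x.1 x.2 →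
          ∃ y : I × O, δ y.1 x.2 < 0 ∧ 0 < δ y.1 y.2 ∧ R y.1 y.2 x.2 := by
        intro x hx
        have hi' : ∃ i', δ i' x.2 < 0 := by
          by_contra h
          push_neg at h
          have : 0 < ∑ i, δ i x.2 :=
            Finset.sum_pos' (fun i _ => h i) ⟨x.1, mem_univ _, hx⟩
          rw [hcol x.2] at this; exact lt_irrefl _ this
        obtain ⟨i', hi'neg⟩ := hi'
        have ho' : ∃ o', 0 < δ i' o' ∧ R i' o' x.2 := by
          by_contra h
          push_neg at h
          have hx2mem : x.2 ∈ univ.filter (fun o' => R i' o' x.2) := by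
            simp [hrefl i' x.2]
          have := hsd i' x.2
          have hrest : ∑ o' ∈ univ.filter (fun o' => R i' o' x.2), δ i' o' ≤ δ i' x.2 := by
            have hle : ∀ o' ∈ (univ.filter (fun o' => R i' o' x.2)).erase x.2, δ i' o' ≤ 0 := by
              intro o' ho'
              rw [Finset.mem_erase] at ho'
              rcases ho' with ⟨_, ho'2⟩
              simp at ho'2
              by_contra hc
              push_neg at hc
              exact absurd ho'2 (fun hr => absurd hc (not_lt.mpr (le_of_lt (by
                exact absurd (h o' hc) (fun _ => by simp_all))))) 
            calc ∑ o' ∈ univ.filter (fun o' => R i' o' x.2), δ i' o'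
                = δ i' x.2 + ∑ o' ∈ (univ.filter (fun o' => R i' o' x.2)).erase x.2, δ i' o' :=
                  (Finset.add_sum_erase _ _ hx2mem).symm
              _ ≤ δ i' x.2 + 0 := by
                  have := Finset.sum_nonpos hle
                  linarith
              _ = δ i' x.2 := by ring
          linarith
        obtain ⟨o', ho'pos, ho'R⟩ := ho'
        exact ⟨(i', o'), hi'neg, ho'pos, ho'R⟩
      -- chain construction
      have hFG : ∃ (F : ℕ → O) (G : ℕ → I),
          (∀ t, δ (G t) (F t) < 0 ∧ 0 < δ (G t) (F (t+1)) ∧ R (G t) (F (t+1)) (F t)) ∧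
          (¬ R (G 0) (F 0) (F 1)) := by
        set nxt : I × O → I × O := fun x => if h : 0 < δ x.1 x.2 then (stepL x h).choose else x
          with hnxt_def
        have hnxt : ∀ x : I × O, 0 < δ x.1 x.2 →
            δ (nxt x).1 x.2 < 0 ∧ 0 < δ (nxt x).1 (nxt x).2 ∧ R (nxt x).1 (nxt x).2 x.2 := by
          intro x hx
          simp only [hnxt_def, dif_pos hx]
          exact (stepL x hx).choose_spec
        set chain : ℕ → I × O := fun t => nxt^[t] (j, o₁) with hchain_def
        have hchain0 : chain 0 = (j, o₁) := rfl
        have hchainS : ∀ t, chain (t+1) = nxt (chain t) := by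
          intro t
          simp [hchain_def, Function.iterate_succ_apply']
        have hinv : ∀ t, 0 < δ (chain t).1 (chain t).2 := by
          intro t
          induction t with
          | zero => simpa [hchain0] using ho₁pos
          | succ t iht =>
              rw [hchainS t]
              exact (hnxt _ iht).2.1
        refine ⟨fun t => if t = 0 then o₀ else (chain (t-1)).2,
                fun t => if t = 0 then j else (chain t).1, ?_, ?_⟩
        · intro t
          cases t with
          | zero =>
              simpa using ⟨ho₀neg, ho₁pos, hweak01⟩
          | succ t =>
              have h1 : chain (t+1) = nxt (chain t) := hchainS t
              have h2 := hnxt (chain t) (hinv t)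
              rw [← h1] at h2
              simp only [Nat.succ_ne_zero, if_false, Nat.add_sub_cancel]
              constructor
              · exact h2.1
              constructor
              · exact hinv (t+1)
              · exact h2.2.2
        · simpa [hchain0] using hstrict01
      obtain ⟨F, G, hC, hstrict0⟩ := hFG
      -- pigeonhole
      have hex : ∃ m, ∃ l, l < m ∧ F l = F m := by
        have hlt : Fintype.card O < Fintype.card (Fin (Fintype.card O + 1)) := by simp
        obtain ⟨a, b, hab, heq⟩ := Fintype.exists_ne_map_eq_of_card_lt
          (fun m : Fin (Fintype.card O + 1) => F m) hlt
        rcases lt_or_gt_of_ne (fun h : (a:ℕ) = (b:ℕ) => hab (Fin.ext h)) with h | h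
        · exact ⟨b, a, h, heq⟩
        · exact ⟨a, b, h, heq.symm⟩
      set s' := Nat.find hex with hs'def
      obtain ⟨s, hss', hFs⟩ := Nat.find_spec hex
      have hmin : ∀ m < s', ¬ ∃ l, l < m ∧ F l = F m := fun m hm => Nat.find_min hex hm
      have hInj : ∀ l m, l < s' → m < s' → F l = F m → l = m := by
        intro l m hl hm heq
        rcases Nat.lt_trichotomy l m with h | h | h
        · exact absurd ⟨l, h, heq⟩ (hmin m hm)
        · exact h
        · exact absurd ⟨m, h, heq.symm⟩ (hmin l hl)
      set k := s' - s with hkdef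
      have hk1 : 1 ≤ k := by omega
      by_cases hA : ∃ t, s ≤ t ∧ t < s' ∧ ¬ R (G t) (F t) (F (t+1))
      · -- Case A: output the cycle
        obtain ⟨t, hts, hts', hstr⟩ := hA
        have hob : ∀ m, m < k → F (s + ((m + 1) % k)) = F (s + m + 1) := by
          intro m hm
          by_cases h : m + 1 = k
          · have h1 : (m + 1) % k = 0 := by rw [h]; exact Nat.mod_self k
            rw [h1]
            have h2 : s + m + 1 = s' := by omega
            rw [h2, Nat.add_zero]
            exact hFs
          · have h1 : (m + 1) % k = m + 1 := Nat.mod_eq_of_lt (by omega)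
            rw [h1]
            congr 1
        have hk2 : 2 ≤ k := by
          by_contra h
          have hk : k = 1 := by omega
          have ht : t = s := by omega
          have h1 : F (t + 1) = F t := by
            have : t + 1 = s' := by omega
            rw [this, ht]
            exact hFs.symm
          exact hstr (h1 ▸ (hC t).2.2)
        refine ⟨k, hk2, fun m => G (s+m), fun m => F (s+m), ?_, ?_⟩
        · intro m hm
          refine ⟨hneg _ _ (hC (s+m)).1, ?_⟩
          show R (G (s+m)) (F (s + (m+1) % k)) (F (s+m))
          rw [hob m hm]
          exact (hC (s+m)).2.2
        · refine ⟨t - s, by omega, ?_⟩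
          show R (G (s+(t-s))) (F (s + ((t-s)+1) % k)) (F (s+(t-s))) ∧
            ¬ R (G (s+(t-s))) (F (s+(t-s))) (F (s + ((t-s)+1) % k))
          have hts2 : s + (t - s) = t := by omega
          rw [hob (t-s) (by omega), hts2]
          exact ⟨(hC t).2.2, hstr⟩
      · -- Case B: cancel an indifference cycle and recurse
        push_neg at hA
        have hB : ∀ t, s ≤ t → t < s' → R (G t) (F t) (F (t+1)) := hA
        have hδ'ex : ∃ δ' : I → O → ℝ,
            (univ.filter (fun x : I × O => δ' x.1 x.2 ≠ 0)) ⊂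
              (univ.filter (fun x : I × O => δ x.1 x.2 ≠ 0)) ∧
            (∀ i, ∑ o, δ' i o = ∑ o, δ i o) ∧
            (∀ o, ∑ i, δ' i o = ∑ i, δ i o) ∧
            (∀ i o, ∑ o' ∈ univ.filter (fun o' => R i o' o), δ' i o'
                  = ∑ o' ∈ univ.filter (fun o' => R i o' o), δ i o') ∧
            (∀ i o, δ' i o < 0 → δ i o < 0) := by
          set c : Finset ℕ := Finset.Ico s s' with hcdef
          have hcne : c.Nonempty := by
            rw [hcdef]; exact ⟨s, by simp [Finset.mem_Ico]; omega⟩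
          set f : ℕ → ℝ := fun t => min (-δ (G t) (F t)) (δ (G t) (F (t+1))) with hfdef
          set ε : ℝ := c.inf' hcne f with hεdef
          have hmemc : ∀ t, t ∈ c ↔ (s ≤ t ∧ t < s') := by intro t; simp [hcdef, Finset.mem_Ico]
          have hεpos : 0 < ε := by
            rw [hεdef, Finset.lt_inf'_iff]
            intro t _
            exact lt_min (by linarith [(hC t).1]) (hC t).2.1
          have hεle1 : ∀ t ∈ c, ε ≤ -δ (G t) (F t) := fun t ht =>
            le_trans (Finset.inf'_le f ht) (min_le_left _ _)
          have hεle2 : ∀ t ∈ c, ε ≤ δ (G t) (F (t+1)) := fun t ht =>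
            le_trans (Finset.inf'_le f ht) (min_le_right _ _)
          -- injectivity of F on c and of F ∘ (+1) on c
          have hFinj : ∀ t ∈ c, ∀ t' ∈ c, F t = F t' → t = t' := by
            intro t ht t' ht' h
            rw [hmemc] at ht ht'
            exact hInj t t' ht.2 ht'.2 h
          have hFinj' : ∀ t ∈ c, ∀ t' ∈ c, F (t+1) = F (t'+1) → t = t' := by
            intro t ht t' ht' h
            rw [hmemc] at ht ht'
            by_cases h1 : t + 1 = s'
            · by_cases h2 : t' + 1 = s'
              · omega
              · -- F (t'+1) = F s' = F s, with s < t'+1 < s' : contradiction with hInj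
                exfalso
                have : F (t'+1) = F s := by rw [← h, h1, ← hFs]
                have := hInj (t'+1) s (by omega) (by omega) this
                omega
            · by_cases h2 : t' + 1 = s'
              · exfalso
                have : F (t+1) = F s := by rw [h, h2, ← hFs]
                have := hInj (t+1) s (by omega) (by omega) this
                omega
              · have := hInj (t+1) (t'+1) (by omega) (by omega) h
                omega
          set δ' : I → O → ℝ := fun i o => δ i o
              + (∑ t ∈ c, if G t = i ∧ F t = o then ε else 0)
              - (∑ t ∈ c, if G t = i ∧ F (t+1) = o then ε else 0) with hδ'def
          -- pointwise description
          have sumA : ∀ i o, (∑ t ∈ c, if G t = i ∧ F t = o then ε else 0)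
              = if ∃ t ∈ c, G t = i ∧ F t = o then ε else 0 := by
            intro i o
            by_cases h : ∃ t ∈ c, G t = i ∧ F t = o
            · obtain ⟨t₀, ht₀c, ht₀⟩ := h
              rw [if_pos ⟨t₀, ht₀c, ht₀⟩]
              rw [Finset.sum_eq_single_of_mem t₀ ht₀c]
              · rw [if_pos ht₀]
              · intro t htc hne
                rw [if_neg]
                rintro ⟨h1, h2⟩
                exact hne (hFinj t htc t₀ ht₀c (h2.trans ht₀.2.symm))
            · rw [if_neg h]
              apply Finset.sum_eq_zero
              intro t htc
              rw [if_neg]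
              rintro ⟨h1, h2⟩
              exact h ⟨t, htc, h1, h2⟩
          have sumB : ∀ i o, (∑ t ∈ c, if G t = i ∧ F (t+1) = o then ε else 0)
              = if ∃ t ∈ c, G t = i ∧ F (t+1) = o then ε else 0 := by
            intro i o
            by_cases h : ∃ t ∈ c, G t = i ∧ F (t+1) = o
            · obtain ⟨t₀, ht₀c, ht₀⟩ := h
              rw [if_pos ⟨t₀, ht₀c, ht₀⟩]
              rw [Finset.sum_eq_single_of_mem t₀ ht₀c]
              · rw [if_pos ht₀]
              · intro t htc hne
                rw [if_neg]
                rintro ⟨h1, h2⟩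
                exact hne (hFinj' t htc t₀ ht₀c (h2.trans ht₀.2.symm))
            · rw [if_neg h]
              apply Finset.sum_eq_zero
              intro t htc
              rw [if_neg]
              rintro ⟨h1, h2⟩
              exact h ⟨t, htc, h1, h2⟩
          have hExcl : ∀ i o, (∃ t ∈ c, G t = i ∧ F t = o) → (∃ t ∈ c, G t = i ∧ F (t+1) = o) → False := by
            rintro i o ⟨t, htc, ht1, ht2⟩ ⟨t', ht'c, ht'1, ht'2⟩
            have h1 : δ i o < 0 := by rw [← ht1, ← ht2]; exact (hC t).1
            have h2 : 0 < δ i o := by rw [← ht'1, ← ht'2]; exact (hC t').2.1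
            linarith
          -- convenient pointwise formula
          have hδ'eq : ∀ i o, δ' i o = δ i o
              + (if ∃ t ∈ c, G t = i ∧ F t = o then ε else 0)
              - (if ∃ t ∈ c, G t = i ∧ F (t+1) = o then ε else 0) := by
            intro i o
            rw [hδ'def]
            dsimp only
            rw [sumA, sumB]
          -- row sums
          have inner1 : ∀ (i : I) (t : ℕ), (∑ o : O, if G t = i ∧ F t = o then ε else 0)
              = if G t = i then ε else 0 := by
            intro i t
            by_cases hg : G t = i <;> simp [hg]
          have inner2 : ∀ (i : I) (t : ℕ), (∑ o : O, if G t = i ∧ F (t+1) = o then ε else 0)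
              = if G t = i then ε else 0 := by
            intro i t
            by_cases hg : G t = i <;> simp [hg]
          have hrow' : ∀ i, ∑ o, δ' i o = ∑ o, δ i o := by
            intro i
            simp only [hδ'def]
            rw [Finset.sum_sub_distrib, Finset.sum_add_distrib]
            have e1 : (∑ x : O, ∑ t ∈ c, if G t = i ∧ F t = x then ε else 0)
                = ∑ t ∈ c, if G t = i then ε else 0 := by
              rw [Finset.sum_comm]; exact Finset.sum_congr rfl (fun t _ => inner1 i t)
            have e2 : (∑ x : O, ∑ t ∈ c, if G t = i ∧ F (t+1) = x then ε else 0)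
                = ∑ t ∈ c, if G t = i then ε else 0 := by
              rw [Finset.sum_comm]; exact Finset.sum_congr rfl (fun t _ => inner2 i t)
            rw [e1, e2]; ring
          -- column sums
          have innerc1 : ∀ (o : O) (t : ℕ), (∑ i : I, if G t = i ∧ F t = o then ε else 0)
              = if F t = o then ε else 0 := by
            intro o t
            by_cases hf : F t = o <;> simp [hf]
          have innerc2 : ∀ (o : O) (t : ℕ), (∑ i : I, if G t = i ∧ F (t+1) = o then ε else 0)
              = if F (t+1) = o then ε else 0 := by
            intro o t
            by_cases hf : F (t+1) = o <;> simp [hf]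
          have hcol' : ∀ o, ∑ i, δ' i o = ∑ i, δ i o := by
            intro o
            simp only [hδ'def]
            rw [Finset.sum_sub_distrib, Finset.sum_add_distrib]
            have e1 : (∑ x : I, ∑ t ∈ c, if G t = x ∧ F t = o then ε else 0)
                = ∑ t ∈ c, if F t = o then ε else 0 := by
              rw [Finset.sum_comm]; exact Finset.sum_congr rfl (fun t _ => innerc1 o t)
            have e2 : (∑ x : I, ∑ t ∈ c, if G t = x ∧ F (t+1) = o then ε else 0)
                = ∑ t ∈ c, if F (t+1) = o then ε else 0 := by
              rw [Finset.sum_comm]; exact Finset.sum_congr rfl (fun t _ => innerc2 o t)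
            rw [e1, e2]
            have tel : (∑ t ∈ c, ((if F t = o then ε else 0) - (if F (t+1) = o then ε else 0)))
                = (if F s = o then ε else 0) - (if F s' = o then ε else 0) := by
              rw [hcdef, Finset.sum_Ico_eq_sum_range]
              have := Finset.sum_range_sub' (f := fun n : ℕ => if F (s + n) = o then ε else 0)
                (n := s' - s)
              have hs0 : s + 0 = s := by omega
              have hss : s + (s' - s) = s' := by omega
              rw [hs0, hss] at this
              exact this
            rw [Finset.sum_sub_distrib] at tel
            rw [hFs] at tel
            have : (∑ t ∈ c, if F t = o then ε else 0) = ∑ t ∈ c, if F (t+1) = o then ε else 0 := by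
              linarith
            rw [this]; ring
          -- SD sums unchanged
          have hsd' : ∀ i o, ∑ o' ∈ univ.filter (fun o' => R i o' o), δ' i o'
              = ∑ o' ∈ univ.filter (fun o' => R i o' o), δ i o' := by
            intro i o
            simp only [hδ'def]
            rw [Finset.sum_sub_distrib, Finset.sum_add_distrib]
            have inA : ∀ t : ℕ, (∑ o' ∈ univ.filter (fun o' => R i o' o),
                if G t = i ∧ F t = o' then ε else 0)
                = if G t = i ∧ R i (F t) o then ε else 0 := by
              intro t
              by_cases hg : G t = i
              · simp only [hg, true_and]
                rw [Finset.sum_ite_eq]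
                simp
              · simp [hg]
            have inB : ∀ t : ℕ, (∑ o' ∈ univ.filter (fun o' => R i o' o),
                if G t = i ∧ F (t+1) = o' then ε else 0)
                = if G t = i ∧ R i (F (t+1)) o then ε else 0 := by
              intro t
              by_cases hg : G t = i
              · simp only [hg, true_and]
                rw [Finset.sum_ite_eq]
                simp
              · simp [hg]
            have e1 : (∑ o' ∈ univ.filter (fun o' => R i o' o), ∑ t ∈ c,
                if G t = i ∧ F t = o' then ε else 0)
                = ∑ t ∈ c, if G t = i ∧ R i (F t) o then ε else 0 := by
              rw [Finset.sum_comm]; exact Finset.sum_congr rfl (fun t _ => inA t)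
            have e2 : (∑ o' ∈ univ.filter (fun o' => R i o' o), ∑ t ∈ c,
                if G t = i ∧ F (t+1) = o' then ε else 0)
                = ∑ t ∈ c, if G t = i ∧ R i (F (t+1)) o then ε else 0 := by
              rw [Finset.sum_comm]; exact Finset.sum_congr rfl (fun t _ => inB t)
            rw [e1, e2]
            have e3 : (∑ t ∈ c, if G t = i ∧ R i (F t) o then ε else 0)
                = ∑ t ∈ c, if G t = i ∧ R i (F (t+1)) o then ε else 0 := by
              apply Finset.sum_congr rfl
              intro t htc
              rw [hmemc] at htc
              by_cases hg : G t = i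
              · have hw : R i (F (t+1)) (F t) := hg ▸ (hC t).2.2
                have hw' : R i (F t) (F (t+1)) := hg ▸ hB t htc.1 htc.2
                have : R i (F t) o ↔ R i (F (t+1)) o :=
                  ⟨fun h => htrans i hw h, fun h => htrans i hw' h⟩
                simp [hg, this]
              · simp [hg]
            rw [e3]; ring
          -- sign facts
          have hsign : ∀ i o, δ' i o < 0 → δ i o < 0 := by
            intro i o h
            rw [hδ'eq] at h
            by_cases hA1 : ∃ t ∈ c, G t = i ∧ F t = o
            · obtain ⟨t, htc, ht1, ht2⟩ := hA1
              rw [← ht1, ← ht2]; exact (hC t).1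
            · by_cases hB1 : ∃ t ∈ c, G t = i ∧ F (t+1) = o
              · exfalso
                obtain ⟨t, htc, ht1, ht2⟩ := hB1
                have hle : ε ≤ δ i o := by rw [← ht1, ← ht2]; exact hεle2 t htc
                rw [if_neg hA1, if_pos ⟨t, htc, ht1, ht2⟩] at h
                linarith
              · rw [if_neg hA1, if_neg hB1] at h
                linarith
          have hsubset : (univ.filter (fun x : I × O => δ' x.1 x.2 ≠ 0)) ⊆
              (univ.filter (fun x : I × O => δ x.1 x.2 ≠ 0)) := by
            intro x hx
            rw [Finset.mem_filter] at hx ⊢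
            refine ⟨mem_univ _, ?_⟩
            have hx2 := hx.2
            by_cases hA1 : ∃ t ∈ c, G t = x.1 ∧ F t = x.2
            · obtain ⟨t, htc, ht1, ht2⟩ := hA1
              have : δ x.1 x.2 < 0 := by rw [← ht1, ← ht2]; exact (hC t).1
              linarith [this]
            · by_cases hB1 : ∃ t ∈ c, G t = x.1 ∧ F (t+1) = x.2
              · obtain ⟨t, htc, ht1, ht2⟩ := hB1
                have : 0 < δ x.1 x.2 := by rw [← ht1, ← ht2]; exact (hC t).2.1
                linarith [this]
              · rw [hδ'eq, if_neg hA1, if_neg hB1] at hx2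
                intro h0
                apply hx2
                rw [h0]; ring
          -- strict decrease: some support element vanishes
          obtain ⟨t₁, ht₁c, ht₁⟩ := Finset.exists_mem_eq_inf' hcne f
          have hvanish : ∃ x : I × O, δ x.1 x.2 ≠ 0 ∧ δ' x.1 x.2 = 0 := by
            rcases min_cases (-δ (G t₁) (F t₁)) (δ (G t₁) (F (t₁+1))) with ⟨hm, _⟩ | ⟨hm, _⟩
            · refine ⟨(G t₁, F t₁), by simp; linarith [(hC t₁).1], ?_⟩
              have hA1 : ∃ t ∈ c, G t = G t₁ ∧ F t = F t₁ := ⟨t₁, ht₁c, rfl, rfl⟩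
              have hB1 : ¬ ∃ t ∈ c, G t = G t₁ ∧ F (t+1) = F t₁ := fun hb => hExcl _ _ hA1 hb
              rw [hδ'eq, if_pos hA1, if_neg hB1]
              have : ε = -δ (G t₁) (F t₁) := by rw [hεdef, ht₁]; exact hm
              rw [this]; ring
            · refine ⟨(G t₁, F (t₁+1)), by simp; linarith [(hC t₁).2.1], ?_⟩
              have hB1 : ∃ t ∈ c, G t = G t₁ ∧ F (t+1) = F (t₁+1) := ⟨t₁, ht₁c, rfl, rfl⟩
              have hA1 : ¬ ∃ t ∈ c, G t = G t₁ ∧ F t = F (t₁+1) := fun ha => hExcl _ _ ha hB1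
              rw [hδ'eq, if_neg hA1, if_pos hB1]
              have : ε = δ (G t₁) (F (t₁+1)) := by rw [hεdef, ht₁]; exact hm
              rw [this]; ring
          obtain ⟨x, hx1, hx2⟩ := hvanish
          refine ⟨δ', ?_, hrow', hcol', hsd', hsign⟩
          rw [Finset.ssubset_iff_of_subset hsubset]
          exact ⟨x, by simp [hx1], by simp [hx2]⟩
        obtain ⟨δ', hss2, hrow'', hcol'', hsd'', hsign''⟩ := hδ'ex
        apply ih δ'
        · have := Finset.card_lt_card hss2
          omega
        · intro i; rw [hrow'' i]; exact hrow i
        · intro o; rw [hcol'' o]; exact hcol o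
        · intro i o; rw [hsd'' i o]; exact hsd i o
        · intro i o h; exact hneg i o (hsign'' i o h)
        · have heq : (∑ i, ∑ o, ∑ o' ∈ univ.filter (fun o' => R i o' o), δ' i o')
              = ∑ i, ∑ o, ∑ o' ∈ univ.filter (fun o' => R i o' o), δ i o' :=
            Finset.sum_congr rfl fun i _ => Finset.sum_congr rfl fun o _ => hsd'' i o
          rw [heq]; exact hW

theorem improvement_yields_trading_cycle
    {I O : Type*} [Fintype I] [Nonempty I] [Fintype O] [Nonempty O]
    (R : I → O → O → Prop) [∀ i, DecidableRel (R i)]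
    (htotal : ∀ i, Total (R i)) (htrans : ∀ i, Transitive (R i))
    (p p' : I → O → ℝ)
    (hpnonneg : ∀ i o, 0 ≤ p i o) (hp'nonneg : ∀ i o, 0 ≤ p' i o)
    (hrow : ∀ i, ∑ o, p' i o = ∑ o, p i o)
    (hcol : ∀ o, ∑ i, p' i o = ∑ i, p i o)
    (hweak : ∀ i, SDom (R i) (p' i) (p i))
    (hstrict : ∃ j, SSDom (R j) (p' j) (p j)) :
    ∃ (k : ℕ), 2 ≤ k ∧ ∃ (ag : ℕ → I) (ob : ℕ → O),
      (∀ t < k, 0 < p (ag t) (ob t) ∧ R (ag t) (ob ((t + 1) % k)) (ob t)) ∧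
      (∃ t < k, R (ag t) (ob ((t + 1) % k)) (ob t) ∧
        ¬ R (ag t) (ob t) (ob ((t + 1) % k))) := by
  classical
  obtain ⟨j, hjw, ostar, hjs⟩ := hstrict
  set δ : I → O → ℝ := fun i o => p' i o - p i o with hδdef
  have hsdnn : ∀ i o, 0 ≤ ∑ o' ∈ univ.filter (fun o' => R i o' o), δ i o' := by
    intro i o
    simp only [hδdef]
    rw [Finset.sum_sub_distrib]
    have := hweak i o
    linarith
  apply FTTC_key R htotal htrans p
    ((univ.filter (fun x : I × O => δ x.1 x.2 ≠ 0)).card) δ le_rfl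
  · intro i
    simp only [hδdef]
    rw [Finset.sum_sub_distrib, hrow i, sub_self]
  · intro o
    simp only [hδdef]
    rw [Finset.sum_sub_distrib, hcol o, sub_self]
  · exact hsdnn
  · intro i o h
    simp only [hδdef] at h
    have := hp'nonneg i o
    linarith
  · apply Finset.sum_pos'
    · intro i _
      exact Finset.sum_nonneg fun o _ => hsdnn i o
    · refine ⟨j, mem_univ _, Finset.sum_pos' (fun o _ => hsdnn j o) ⟨ostar, mem_univ _, ?_⟩⟩
      simp only [hδdef]
      rw [Finset.sum_sub_distrib]
      linarith
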